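/- Let Γ be a countable discrete abelian group and X a finite-dimensional complex Hilbert space. For every h ∈ AP(Γ, X) and every ε > 0 there exist finitely many characters χ₁, …, χ_N ∈ Γ̂ and scalars a₁, …, a_N ∈ ℂ such that the trigonometric polynomial p(γ) = Σ_{k=1}^N a_k·χ_k(γ)·ĥ(χ_k) satisfies sup_{γ∈Γ} ‖h(γ) − p(γ)‖ < ε. In particular, h is the uniform limit of trigonometric polynomials whose Bohr–Fourier spectra are contained in Λ(h). -/

import Mathlib

open Filter
open Finset

/-- A character of the discrete abelian group `Γ`. -/
def IsChar {Γ : Type*} [AddCommGroup Γ] (χ : Γ → ℂ) : Prop :=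
  (∀ γ γ' : Γ, χ (γ + γ') = χ γ * χ γ') ∧ ∀ γ : Γ, ‖χ γ‖ = 1

/-- An `X`-valued trigonometric polynomial on `Γ`. -/
def IsTrigPoly {Γ X : Type*} [AddCommGroup Γ] [NormedAddCommGroup X] [Module ℂ X]
    (p : Γ → X) : Prop :=
  ∃ (n : ℕ) (χ : Fin n → Γ → ℂ) (a : Fin n → X),
    (∀ k, IsChar (χ k)) ∧ ∀ γ, p γ = ∑ k, χ k γ • a k

/-- An almost periodic `X`-valued function on `Γ`: a uniform limit of trigonometric
polynomials. -/
def IsAP {Γ X : Type*} [AddCommGroup Γ] [NormedAddCommGroup X] [Module ℂ X]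
    (h : Γ → X) : Prop :=
  ∀ ε : ℝ, 0 < ε → ∃ p : Γ → X, IsTrigPoly p ∧ ∀ γ, ‖h γ - p γ‖ < ε

/-- A Bohr–Bochner sequence for `Γ`. -/
def IsBohrBochner {Γ : Type*} [AddCommGroup Γ] [DecidableEq Γ] (H : ℕ → Finset Γ) : Prop :=
  Monotone H ∧ (∀ γ : Γ, ∃ n, γ ∈ H n) ∧
    ∀ γ : Γ, Tendsto
      (fun n => (((H n).filter fun x => γ + x ∉ H n).card : ℝ) / ((H n).card : ℝ))
      atTop (nhds 0)

section Aux

set_option linter.unusedSectionVars false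
variable {Γ : Type*} [AddCommGroup Γ] [DecidableEq Γ]
variable {X : Type*} [NormedAddCommGroup X] [NormedSpace ℂ X]

/-- average of `f` over `H n` -/
noncomputable def avg (H : ℕ → Finset Γ) (f : Γ → X) (n : ℕ) : X :=
  ((H n).card : ℂ)⁻¹ • ∑ γ ∈ H n, f γ

lemma mul_conj_one {z : ℂ} (hz : ‖z‖ = 1) : z * (starRingEnd ℂ) z = 1 := by
  rw [Complex.mul_conj, Complex.normSq_eq_norm_sq, hz]
  norm_num

lemma conj_eq_inv {z : ℂ} (hz : ‖z‖ = 1) : (starRingEnd ℂ) z = z⁻¹ := by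
  have hz0 : z ≠ 0 := by
    intro h; rw [h] at hz; simp at hz
  field_simp
  rw [mul_comm]
  exact mul_conj_one hz

lemma avg_norm_le (H : ℕ → Finset Γ) (f : Γ → X) (n : ℕ) {C : ℝ}
    (hf : ∀ γ, ‖f γ‖ ≤ C) (hC : 0 ≤ C) : ‖avg H f n‖ ≤ C := by
  unfold avg
  rw [norm_smul]
  rcases Nat.eq_zero_or_pos (H n).card with h0 | hpos
  · rw [h0]; simp [hC]
  · have h1 : ‖∑ γ ∈ H n, f γ‖ ≤ ((H n).card : ℝ) * C := by
      refine le_trans (norm_sum_le _ _) ?_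
      rw [← nsmul_eq_mul]
      exact Finset.sum_le_card_nsmul _ _ _ fun γ _ => hf γ
    have h2 : ‖(((H n).card : ℂ))⁻¹‖ = (((H n).card : ℝ))⁻¹ := by
      rw [norm_inv, Complex.norm_natCast]
    rw [h2]
    have hcpos : (0:ℝ) < ((H n).card : ℝ) := by exact_mod_cast hpos
    calc (((H n).card : ℝ))⁻¹ * ‖∑ γ ∈ H n, f γ‖
        ≤ (((H n).card : ℝ))⁻¹ * (((H n).card : ℝ) * C) := by
          exact mul_le_mul_of_nonneg_left h1 (by positivity)
      _ = C := by field_simp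

/-- the Følner property: averages are asymptotically shift invariant -/
lemma folner {H : ℕ → Finset Γ} (hH : IsBohrBochner H) (f : Γ → X) {C : ℝ}
    (hf : ∀ γ, ‖f γ‖ ≤ C) (τ : Γ) :
    Tendsto (fun n => avg H (fun γ => f (τ + γ)) n - avg H f n) atTop (nhds 0) := by
  have hC : 0 ≤ C := le_trans (norm_nonneg _) (hf 0)
  apply squeeze_zero_norm (a := fun n => 2 * C * ((((H n).filter fun x => τ + x ∉ H n).card : ℝ) / ((H n).card : ℝ)))
  · intro n
    set A := (H n).image (fun x => τ + x) with hA
    have hinj : Function.Injective (fun x : Γ => τ + x) := fun a b hab => by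
      simpa using hab
    have hshift : ∑ γ ∈ H n, f (τ + γ) = ∑ γ ∈ A, f γ := by
      rw [hA, Finset.sum_image (fun a _ b _ hab => hinj hab)]
    have hdiff : avg H (fun γ => f (τ + γ)) n - avg H f n
        = ((H n).card : ℂ)⁻¹ • (∑ γ ∈ A \ H n, f γ - ∑ γ ∈ H n \ A, f γ) := by
      unfold avg
      rw [hshift, ← smul_sub]
      congr 1
      have e1 : ∑ γ ∈ A ∩ H n, f γ + ∑ γ ∈ A \ H n, f γ = ∑ γ ∈ A, f γ :=
        Finset.sum_inter_add_sum_sdiff A (H n) f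
      have e2 : ∑ γ ∈ H n ∩ A, f γ + ∑ γ ∈ H n \ A, f γ = ∑ γ ∈ H n, f γ :=
        Finset.sum_inter_add_sum_sdiff (H n) A f
      rw [← e1, ← e2, Finset.inter_comm]
      abel
    have hcardAB : (A \ H n).card = ((H n).filter fun x => τ + x ∉ H n).card := by
      have himg : A \ H n = ((H n).filter fun x => τ + x ∉ H n).image (fun x => τ + x) := by
        ext y
        simp only [hA, Finset.mem_sdiff, Finset.mem_image, Finset.mem_filter]
        constructor
        · rintro ⟨⟨x, hx, rfl⟩, hy⟩
          exact ⟨x, ⟨hx, hy⟩, rfl⟩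
        · rintro ⟨x, ⟨hx, hnx⟩, rfl⟩
          exact ⟨⟨x, hx, rfl⟩, hnx⟩
      rw [himg, Finset.card_image_of_injective _ hinj]
    have hcardBA : (H n \ A).card = (A \ H n).card := by
      have hAcard : A.card = (H n).card := Finset.card_image_of_injective _ hinj
      have c1 := Finset.card_inter_add_card_sdiff A (H n)
      have c2 := Finset.card_inter_add_card_sdiff (H n) A
      rw [Finset.inter_comm] at c1
      omega
    rw [hdiff, norm_smul]
    have h2 : ‖(((H n).card : ℂ))⁻¹‖ = (((H n).card : ℝ))⁻¹ := by
      rw [norm_inv, Complex.norm_natCast]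
    rw [h2]
    have hbound : ‖∑ γ ∈ A \ H n, f γ - ∑ γ ∈ H n \ A, f γ‖
        ≤ 2 * C * (((H n).filter fun x => τ + x ∉ H n).card : ℝ) := by
      refine le_trans (norm_sub_le _ _) ?_
      have b1 : ‖∑ γ ∈ A \ H n, f γ‖ ≤ ((A \ H n).card : ℝ) * C := by
        refine le_trans (norm_sum_le _ _) ?_
        rw [← nsmul_eq_mul, ← Finset.sum_const]
        exact Finset.sum_le_sum fun γ _ => hf γ
      have b2 : ‖∑ γ ∈ H n \ A, f γ‖ ≤ ((H n \ A).card : ℝ) * C := by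
        refine le_trans (norm_sum_le _ _) ?_
        rw [← nsmul_eq_mul, ← Finset.sum_const]
        exact Finset.sum_le_sum fun γ _ => hf γ
      calc ‖∑ γ ∈ A \ H n, f γ‖ + ‖∑ γ ∈ H n \ A, f γ‖
          ≤ ((A \ H n).card : ℝ) * C + ((H n \ A).card : ℝ) * C := add_le_add b1 b2
        _ = 2 * C * (((H n).filter fun x => τ + x ∉ H n).card : ℝ) := by
            rw [hcardBA, hcardAB]; ring
    calc (((H n).card : ℝ))⁻¹ * ‖∑ γ ∈ A \ H n, f γ - ∑ γ ∈ H n \ A, f γ‖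
        ≤ (((H n).card : ℝ))⁻¹ * (2 * C * (((H n).filter fun x => τ + x ∉ H n).card : ℝ)) :=
          mul_le_mul_of_nonneg_left hbound (by positivity)
      _ = 2 * C * ((((H n).filter fun x => τ + x ∉ H n).card : ℝ) / ((H n).card : ℝ)) := by
          ring
  · have := (hH.2.2 τ).const_mul (2 * C)
    simpa using this


/-- eventually the sets are nonempty -/
lemma eventually_nonempty {H : ℕ → Finset Γ} (hH : IsBohrBochner H) :
    ∀ᶠ n in atTop, (H n).Nonempty := by
  obtain ⟨n0, hn0⟩ := hH.2.1 0
  refine eventually_atTop.2 ⟨n0, fun n hn => ⟨0, hH.1 hn hn0⟩⟩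

open scoped Classical in
/-- the mean of a character -/
lemma char_avg {H : ℕ → Finset Γ} (hH : IsBohrBochner H) {χ : Γ → ℂ} (hχ : IsChar χ) :
    Tendsto (fun n => avg H χ n) atTop
      (nhds (if χ = (fun _ => (1 : ℂ)) then (1 : ℂ) else 0)) := by
  by_cases hone : χ = (fun _ => (1 : ℂ))
  · rw [if_pos hone]
    subst hone
    have : ∀ᶠ n in atTop, avg H (fun _ => (1:ℂ)) n = 1 := by
      filter_upwards [eventually_nonempty hH] with n hn
      unfold avg
      rw [Finset.sum_const, nsmul_eq_mul, mul_one, smul_eq_mul]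
      have hcne : ((H n).card : ℂ) ≠ 0 := by
        have := Finset.card_pos.2 hn
        exact_mod_cast this.ne'
      field_simp
    exact Tendsto.congr' (this.mono fun n hn => hn.symm) tendsto_const_nhds
  · rw [if_neg hone]
    have hex : ∃ γ0, χ γ0 ≠ 1 := by
      by_contra hcon
      push_neg at hcon
      exact hone (funext fun γ => hcon γ)
    obtain ⟨γ0, hγ0⟩ := hex
    have hbd : ∀ γ, ‖χ γ‖ ≤ 1 := fun γ => le_of_eq (hχ.2 γ)
    have hf := folner hH χ hbd γ0
    have hshift : ∀ n, avg H (fun γ => χ (γ0 + γ)) n = χ γ0 * avg H χ n := by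
      intro n
      unfold avg
      rw [smul_eq_mul, smul_eq_mul]
      have : ∑ γ ∈ H n, χ (γ0 + γ) = χ γ0 * ∑ γ ∈ H n, χ γ := by
        rw [Finset.mul_sum]
        exact Finset.sum_congr rfl fun γ _ => hχ.1 γ0 γ
      rw [this]; ring
    have hf2 : Tendsto (fun n => (χ γ0 - 1) * avg H χ n) atTop (nhds 0) := by
      refine Tendsto.congr (fun n => ?_) hf
      rw [hshift n]; ring
    have hne : χ γ0 - 1 ≠ 0 := sub_ne_zero.2 hγ0
    have := hf2.const_mul (χ γ0 - 1)⁻¹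
    rw [mul_zero] at this
    refine Tendsto.congr (fun n => ?_) this
    field_simp

/-- averaging is linear over finite sums of scalar multiples -/
lemma avg_sum {ι : Type*} (H : ℕ → Finset Γ) (s : Finset ι) (F : ι → Γ → X) (n : ℕ) :
    avg H (fun γ => ∑ i ∈ s, F i γ) n = ∑ i ∈ s, avg H (F i) n := by
  unfold avg
  rw [Finset.sum_comm, Finset.smul_sum]

lemma avg_csmul (H : ℕ → Finset Γ) (c : ℂ) (f : Γ → X) (n : ℕ) :
    avg H (fun γ => c • f γ) n = c • avg H f n := by
  unfold avg
  rw [← Finset.smul_sum, smul_comm]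

lemma avg_smul_vec (H : ℕ → Finset Γ) (f : Γ → ℂ) (v : X) (n : ℕ) :
    avg H (fun γ => f γ • v) n = (avg H f n) • v := by
  unfold avg
  rw [← Finset.sum_smul, smul_assoc]

/-- existence of the mean of `conj χ • q` for a trigonometric polynomial `q` -/
lemma trig_avg_exists {H : ℕ → Finset Γ} (hH : IsBohrBochner H) {χ : Γ → ℂ} (hχ : IsChar χ)
    {m : ℕ} {ψ : Fin m → Γ → ℂ} (b : Fin m → X) (hψ : ∀ k, IsChar (ψ k)) :
    ∃ c : X, Tendsto (fun n => avg H (fun γ => (starRingEnd ℂ) (χ γ) • ∑ k, ψ k γ • b k) n)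
      atTop (nhds c) := by
  classical
  have hrw : ∀ n, avg H (fun γ => (starRingEnd ℂ) (χ γ) • ∑ k, ψ k γ • b k) n
      = ∑ k, (avg H (fun γ => (starRingEnd ℂ) (χ γ) * ψ k γ) n) • b k := by
    intro n
    have : (fun γ => (starRingEnd ℂ) (χ γ) • ∑ k, ψ k γ • b k)
        = fun γ => ∑ k, ((starRingEnd ℂ) (χ γ) * ψ k γ) • b k := by
      funext γ
      rw [Finset.smul_sum]
      exact Finset.sum_congr rfl fun k _ => smul_smul _ _ _
    rw [this, avg_sum]
    exact Finset.sum_congr rfl fun k _ => avg_smul_vec H _ _ n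
  have hchar : ∀ k : Fin m, IsChar (fun γ => (starRingEnd ℂ) (χ γ) * ψ k γ) := by
    intro k
    constructor
    · intro γ γ'
      simp only []
      rw [hχ.1 γ γ', (hψ k).1 γ γ', map_mul]
      ring
    · intro γ
      simp only []
      rw [norm_mul, RCLike.norm_conj, hχ.2 γ, (hψ k).2 γ, one_mul]
  refine ⟨∑ k, (if (fun γ => (starRingEnd ℂ) (χ γ) * ψ k γ) = (fun _ => (1:ℂ)) then (1:ℂ) else 0) • b k, ?_⟩
  refine Tendsto.congr (fun n => (hrw n).symm) ?_
  exact tendsto_finset_sum _ fun k _ => (char_avg hH (hchar k)).smul_const (b k)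


/-- existence of Fourier coefficients of almost periodic functions -/
lemma fourier_exists [CompleteSpace X] {H : ℕ → Finset Γ} (hH : IsBohrBochner H)
    {h : Γ → X} (hAP : IsAP h) {χ : Γ → ℂ} (hχ : IsChar χ) :
    ∃ c : X, Tendsto (fun n => avg H (fun γ => (starRingEnd ℂ) (χ γ) • h γ) n) atTop (nhds c) := by
  apply cauchySeq_tendsto_of_complete
  rw [Metric.cauchySeq_iff]
  intro ε' hε'
  obtain ⟨q, ⟨m, ψ, b, hψ, hrep⟩, herr⟩ := hAP (ε' / 4) (by positivity)
  obtain ⟨c0, hc0⟩ := trig_avg_exists hH hχ b hψ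
  obtain ⟨N1, hN1⟩ := Metric.cauchySeq_iff.1 hc0.cauchySeq (ε' / 4) (by positivity)
  refine ⟨N1, fun i hi j hj => ?_⟩
  have key : ∀ n, ‖avg H (fun γ => (starRingEnd ℂ) (χ γ) • h γ) n
      - avg H (fun γ => (starRingEnd ℂ) (χ γ) • ∑ k, ψ k γ • b k) n‖ ≤ ε' / 4 := by
    intro n
    have hd : avg H (fun γ => (starRingEnd ℂ) (χ γ) • h γ) n
        - avg H (fun γ => (starRingEnd ℂ) (χ γ) • ∑ k, ψ k γ • b k) n
        = avg H (fun γ => (starRingEnd ℂ) (χ γ) • (h γ - q γ)) n := by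
      unfold avg
      rw [← smul_sub, ← Finset.sum_sub_distrib]
      congr 1
      refine Finset.sum_congr rfl fun γ _ => ?_
      rw [← smul_sub]
      simp only [hrep γ]
    rw [hd]
    refine avg_norm_le H _ n (fun γ => ?_) (by positivity)
    rw [norm_smul, RCLike.norm_conj, hχ.2 γ, one_mul]
    exact (herr γ).le
  have tri := dist_triangle4 (avg H (fun γ => (starRingEnd ℂ) (χ γ) • h γ) i)
    (avg H (fun γ => (starRingEnd ℂ) (χ γ) • ∑ k, ψ k γ • b k) i)
    (avg H (fun γ => (starRingEnd ℂ) (χ γ) • ∑ k, ψ k γ • b k) j)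
    (avg H (fun γ => (starRingEnd ℂ) (χ γ) • h γ) j)
  have d1 : dist (avg H (fun γ => (starRingEnd ℂ) (χ γ) • h γ) i)
      (avg H (fun γ => (starRingEnd ℂ) (χ γ) • ∑ k, ψ k γ • b k) i) ≤ ε' / 4 := by
    rw [dist_eq_norm]; exact key i
  have d3 : dist (avg H (fun γ => (starRingEnd ℂ) (χ γ) • ∑ k, ψ k γ • b k) j)
      (avg H (fun γ => (starRingEnd ℂ) (χ γ) • h γ) j) ≤ ε' / 4 := by
    rw [dist_comm, dist_eq_norm]; exact key j
  have d2 := hN1 i hi j hj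
  linarith [tri, d1, d2, d3]

/-- the shifted Fourier averages converge to `χ γ • c` -/
lemma fourier_shift {H : ℕ → Finset Γ} (hH : IsBohrBochner H)
    {h : Γ → X} {C0 : ℝ} (hb : ∀ γ, ‖h γ‖ ≤ C0) {χ : Γ → ℂ} (hχ : IsChar χ) {c : X}
    (hc : Tendsto (fun n => avg H (fun γ' => (starRingEnd ℂ) (χ γ') • h γ') n) atTop (nhds c))
    (γ : Γ) :
    Tendsto (fun n => avg H (fun γ' => (starRingEnd ℂ) (χ γ') • h (γ + γ')) n) atTop
      (nhds (χ γ • c)) := by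
  set f : Γ → X := fun γ' => (starRingEnd ℂ) (χ γ') • h γ' with hf
  have hfb : ∀ γ', ‖f γ'‖ ≤ C0 := by
    intro γ'
    rw [hf]
    simp only []
    rw [norm_smul, RCLike.norm_conj, hχ.2 γ', one_mul]
    exact hb γ'
  have hfol := folner hH f hfb γ
  have hshift : Tendsto (fun n => avg H (fun γ' => f (γ + γ')) n) atTop (nhds c) := by
    have := hfol.add hc
    simpa using this
  have heq : ∀ n, avg H (fun γ' => (starRingEnd ℂ) (χ γ') • h (γ + γ')) n
      = χ γ • avg H (fun γ' => f (γ + γ')) n := by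
    intro n
    rw [← avg_csmul]
    congr 1
    funext γ'
    rw [hf]
    simp only []
    rw [smul_smul, hχ.1 γ γ', map_mul, ← mul_assoc, mul_conj_one (hχ.2 γ), one_mul]
  refine Tendsto.congr (fun n => (heq n).symm) ?_
  exact hshift.const_smul (χ γ)


lemma avg_lin3 (H : ℕ → Finset Γ) (c : ℂ) (f g k : Γ → ℂ) (N : ℕ) :
    avg H (fun γ => c * (2 * f γ - g γ - k γ)) N
      = c * (2 * avg H f N - avg H g N - avg H k N) := by
  unfold avg
  simp only [smul_eq_mul]
  have hs : ∑ γ ∈ H N, c * (2 * f γ - g γ - k γ)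
      = c * (2 * ∑ γ ∈ H N, f γ - ∑ γ ∈ H N, g γ - ∑ γ ∈ H N, k γ) := by
    calc ∑ γ ∈ H N, c * (2 * f γ - g γ - k γ)
        = ∑ γ ∈ H N, ((2 * c) * f γ - (c * g γ + c * k γ)) :=
          Finset.sum_congr rfl fun γ _ => by ring
      _ = (2 * c) * ∑ γ ∈ H N, f γ - (c * ∑ γ ∈ H N, g γ + c * ∑ γ ∈ H N, k γ) := by
          rw [Finset.sum_sub_distrib, Finset.sum_add_distrib, ← Finset.mul_sum, ← Finset.mul_sum,
            ← Finset.mul_sum]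
      _ = c * (2 * ∑ γ ∈ H N, f γ - ∑ γ ∈ H N, g γ - ∑ γ ∈ H N, k γ) := by ring
  rw [hs]
  ring

section Chars
variable {n : ℕ} {ψ : Fin n → Γ → ℂ}

lemma char_ne_zero {χ : Γ → ℂ} (hχ : IsChar χ) (γ : Γ) : χ γ ≠ 0 := by
  intro h
  have := hχ.2 γ
  rw [h] at this
  simp at this

lemma isChar_zprod (hψ : ∀ i, IsChar (ψ i)) (l : Fin n → ℤ) :
    IsChar (fun γ => ∏ i, ψ i γ ^ (l i)) := by
  constructor
  · intro γ γ'
    simp only []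
    rw [← Finset.prod_mul_distrib]
    refine Finset.prod_congr rfl fun i _ => ?_
    rw [(hψ i).1 γ γ', mul_zpow]
  · intro γ
    simp only []
    rw [norm_prod]
    refine Finset.prod_eq_one fun i _ => ?_
    rw [norm_zpow, (hψ i).2 γ, one_zpow]

lemma zprod_mul (hψ : ∀ i, IsChar (ψ i)) (l m : Fin n → ℤ) (γ : Γ) :
    (∏ i, ψ i γ ^ (l i)) * (∏ i, ψ i γ ^ (m i)) = ∏ i, ψ i γ ^ ((l + m) i) := by
  rw [← Finset.prod_mul_distrib]
  refine Finset.prod_congr rfl fun i _ => ?_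
  rw [Pi.add_apply, zpow_add₀ (char_ne_zero (hψ i) γ)]

lemma zprod_conj (hψ : ∀ i, IsChar (ψ i)) (l : Fin n → ℤ) (γ : Γ) :
    (starRingEnd ℂ) (∏ i, ψ i γ ^ (l i)) = ∏ i, ψ i γ ^ ((-l) i) := by
  rw [map_prod]
  refine Finset.prod_congr rfl fun i _ => ?_
  rw [map_zpow₀, conj_eq_inv ((hψ i).2 γ), Pi.neg_apply, zpow_neg, inv_zpow]

lemma zprod_single (hψ : ∀ i, IsChar (ψ i)) (j : Fin n) (γ : Γ) :
    (∏ i, ψ i γ ^ ((Pi.single j 1 : Fin n → ℤ) i)) = ψ j γ := by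
  classical
  rw [Finset.prod_eq_single j]
  · rw [Pi.single_eq_same, zpow_one]
  · intro i _ hij
    rw [Pi.single_eq_of_ne hij, zpow_zero]
  · intro hj
    exact absurd (Finset.mem_univ j) hj

lemma zprod_zero (γ : Γ) : (∏ i, ψ i γ ^ ((0 : Fin n → ℤ) i)) = 1 := by
  refine Finset.prod_eq_one fun i _ => ?_
  rw [Pi.zero_apply, zpow_zero]

end Chars

end Aux

section Comb

/-- cardinality of the diagonal fiber in a discrete square -/
lemma fiber_card (M : ℕ) (d : ℤ) :
    (((range M) ×ˢ (range M)).filter (fun p => (p.1 : ℤ) - (p.2 : ℤ) = d)).card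
      = M - d.natAbs := by
  rcases le_or_gt 0 d with hd | hd
  · have h1 : ((range M) ×ˢ (range M)).filter (fun p => (p.1 : ℤ) - (p.2 : ℤ) = d)
        = (range (M - d.toNat)).image (fun y => (y + d.toNat, y)) := by
      ext ⟨x, y⟩
      simp only [mem_filter, mem_product, mem_range, mem_image, Prod.mk.injEq]
      constructor
      · rintro ⟨⟨hx, hy⟩, hxy⟩
        exact ⟨y, by omega, by omega, rfl⟩
      · rintro ⟨y', hy', rfl, rfl⟩
        refine ⟨⟨by omega, by omega⟩, by omega⟩
    rw [h1, Finset.card_image_of_injective _ (fun a b hab => by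
      simpa using congrArg Prod.snd hab), Finset.card_range]
    omega
  · have h1 : ((range M) ×ˢ (range M)).filter (fun p => (p.1 : ℤ) - (p.2 : ℤ) = d)
        = (range (M - (-d).toNat)).image (fun x => (x, x + (-d).toNat)) := by
      ext ⟨x, y⟩
      simp only [mem_filter, mem_product, mem_range, mem_image, Prod.mk.injEq]
      constructor
      · rintro ⟨⟨hx, hy⟩, hxy⟩
        exact ⟨x, by omega, rfl, by omega⟩
      · rintro ⟨x', hx', rfl, rfl⟩
        refine ⟨⟨by omega, by omega⟩, by omega⟩
    rw [h1, Finset.card_image_of_injective _ (fun a b hab => by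
      simpa using congrArg Prod.fst hab), Finset.card_range]
    omega

/-- collection of a square sum into fibers -/
lemma collect (M : ℕ) (c : ℤ) (hc : c.natAbs ≤ 1) (v : ℤ → ℝ) :
    ∑ p ∈ (range M) ×ˢ (range M), v ((p.1 : ℤ) - (p.2 : ℤ) + c)
      = ∑ z ∈ Finset.Icc (-(M : ℤ) - 1) ((M : ℤ) + 1), ((M - (z - c).natAbs : ℕ) : ℝ) * v z := by
  rw [← Finset.sum_fiberwise_of_maps_to (g := fun p => (p.1 : ℤ) - (p.2 : ℤ) + c)
    (t := Finset.Icc (-(M : ℤ) - 1) ((M : ℤ) + 1)) (fun p hp => by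
      simp only [mem_product, mem_range] at hp
      simp only [Finset.mem_Icc]; omega)]
  refine Finset.sum_congr rfl fun z hz => ?_
  have h2 : ∀ p ∈ ((range M) ×ˢ (range M)).filter
      (fun p => (p.1 : ℤ) - (p.2 : ℤ) + c = z), v ((p.1 : ℤ) - (p.2 : ℤ) + c) = v z := by
    intro p hp
    simp only [mem_filter] at hp
    rw [hp.2]
  rw [Finset.sum_congr rfl h2, Finset.sum_const]
  have h3 : ((range M) ×ˢ (range M)).filter (fun p => (p.1 : ℤ) - (p.2 : ℤ) + c = z)
      = ((range M) ×ˢ (range M)).filter (fun p => (p.1 : ℤ) - (p.2 : ℤ) = z - c) := by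
    apply Finset.filter_congr; intro p _; constructor <;> intro hh <;> omega
  rw [h3, fiber_card M (z - c), nsmul_eq_mul]

/-- the pointwise concavity inequality for the Fejér weights -/
lemma q_ineq (M : ℕ) (hM : 1 ≤ M) (z : ℤ) :
    (2 - 2 / (M : ℝ)) * ((M - z.natAbs : ℕ) : ℝ)
      ≤ ((M - (z - 1).natAbs : ℕ) : ℝ) + ((M - (z + 1).natAbs : ℕ) : ℝ) := by
  have hMR : (1 : ℝ) ≤ (M : ℝ) := by exact_mod_cast hM
  have hMpos : (0 : ℝ) < M := by linarith
  by_cases hz : z = 0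
  · subst hz
    have e1 : ((0 : ℤ) - 1).natAbs = 1 := rfl
    have e2 : ((0 : ℤ) + 1).natAbs = 1 := rfl
    have e0 : (0 : ℤ).natAbs = 0 := rfl
    rw [e1, e2, e0, Nat.sub_zero]
    have : ((M - 1 : ℕ) : ℝ) = (M : ℝ) - 1 := by
      rw [Nat.cast_sub hM]; norm_num
    rw [this]
    have : (2 - 2 / (M : ℝ)) * (M : ℝ) = 2 * (M : ℝ) - 2 := by
      field_simp
    rw [this]; ring_nf; exact le_refl _
  · have habs : (z - 1).natAbs + (z + 1).natAbs = 2 * z.natAbs := by omega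
    set a := z.natAbs with ha
    have h2M : (0 : ℝ) ≤ 2 - 2 / (M : ℝ) := by
      have : 2 / (M : ℝ) ≤ 2 := by
        rw [div_le_iff₀ hMpos]; nlinarith
      linarith
    rcases le_or_gt a M with haM | haM
    · -- exact cast for M - a
      have hcast : ((M - a : ℕ) : ℝ) = (M : ℝ) - a := by
        rw [Nat.cast_sub haM]
      have hb : ((M : ℝ)) - ((z - 1).natAbs : ℝ) ≤ ((M - (z - 1).natAbs : ℕ) : ℝ) := by
        rcases le_total ((z - 1).natAbs) M with hh | hh
        · rw [Nat.cast_sub hh]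
        · have : M - (z - 1).natAbs = 0 := by omega
          rw [this]; push_cast; have : (M : ℝ) ≤ ((z - 1).natAbs : ℝ) := by exact_mod_cast hh
          linarith
      have hb' : ((M : ℝ)) - ((z + 1).natAbs : ℝ) ≤ ((M - (z + 1).natAbs : ℕ) : ℝ) := by
        rcases le_total ((z + 1).natAbs) M with hh | hh
        · rw [Nat.cast_sub hh]
        · have : M - (z + 1).natAbs = 0 := by omega
          rw [this]; push_cast; have : (M : ℝ) ≤ ((z + 1).natAbs : ℝ) := by exact_mod_cast hh
          linarith
      have hsum : ((z - 1).natAbs : ℝ) + ((z + 1).natAbs : ℝ) = 2 * (a : ℝ) := by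
        exact_mod_cast congrArg (fun t : ℕ => (t : ℝ)) habs
      have lhs_le : (2 - 2 / (M : ℝ)) * ((M - a : ℕ) : ℝ) ≤ 2 * ((M : ℝ) - a) := by
        rw [hcast]
        have hMa : (0 : ℝ) ≤ (M : ℝ) - a := by
          have : (a : ℝ) ≤ M := by exact_mod_cast haM
          linarith
        nlinarith [div_nonneg (by norm_num : (0:ℝ) ≤ 2) hMpos.le]
      calc (2 - 2 / (M : ℝ)) * ((M - a : ℕ) : ℝ) ≤ 2 * ((M : ℝ) - a) := lhs_le
        _ = ((M : ℝ) - ((z - 1).natAbs : ℝ)) + ((M : ℝ) - ((z + 1).natAbs : ℝ)) := by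
            linarith [hsum]
        _ ≤ _ := by linarith
    · have : M - a = 0 := by omega
      rw [this]
      simp only [Nat.cast_zero, mul_zero]
      positivity

/-- the one–dimensional Fejér kernel inequality -/
lemma one_dim (M : ℕ) (hM : 1 ≤ M) (u : ℤ → ℝ) (hu : ∀ z, 0 ≤ u z) :
    (2 - 2 / (M : ℝ)) * ∑ p ∈ (range M) ×ˢ (range M), u ((p.1 : ℤ) - (p.2 : ℤ))
      ≤ ∑ p ∈ (range M) ×ˢ (range M),
          (u ((p.1 : ℤ) - (p.2 : ℤ) + 1) + u ((p.1 : ℤ) - (p.2 : ℤ) - 1)) := by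
  have e0 := collect M 0 (by norm_num) u
  have e1 := collect M 1 (by norm_num) u
  have em1 := collect M (-1) (by norm_num) u
  simp only [add_zero, sub_zero] at e0
  have em1' : ∑ p ∈ (range M) ×ˢ (range M), u ((p.1 : ℤ) - (p.2 : ℤ) - 1)
      = ∑ z ∈ Finset.Icc (-(M : ℤ) - 1) ((M : ℤ) + 1), ((M - (z + 1).natAbs : ℕ) : ℝ) * u z := by
    simp only [sub_neg_eq_add, ← sub_eq_add_neg] at em1
    exact em1
  rw [Finset.sum_add_distrib, e1, em1', e0, Finset.mul_sum, ← Finset.sum_add_distrib]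
  refine Finset.sum_le_sum fun z _ => ?_
  have hq := q_ineq M hM z
  have := hu z
  calc (2 - 2 / (M : ℝ)) * (((M - z.natAbs : ℕ) : ℝ) * u z)
      = ((2 - 2 / (M : ℝ)) * ((M - z.natAbs : ℕ) : ℝ)) * u z := by ring
    _ ≤ (((M - (z - 1).natAbs : ℕ) : ℝ) + ((M - (z + 1).natAbs : ℕ) : ℝ)) * u z :=
        mul_le_mul_of_nonneg_right hq this
    _ = ((M - (z - 1).natAbs : ℕ) : ℝ) * u z + ((M - (z + 1).natAbs : ℕ) : ℝ) * u z := by ring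


/-- a sum over pairs of `Fin M` as a sum over a square of naturals -/
lemma sq_sum (M : ℕ) (g : ℤ → ℝ) :
    ∑ x : Fin M × Fin M, g ((x.1 : ℤ) - (x.2 : ℤ))
      = ∑ p ∈ (range M) ×ˢ (range M), g ((p.1 : ℤ) - (p.2 : ℤ)) := by
  rw [Fintype.sum_prod_type, Finset.sum_product]
  rw [Fin.sum_univ_eq_sum_range (fun a => ∑ b : Fin M, g ((a : ℤ) - (b : ℤ))) M]
  refine Finset.sum_congr rfl fun a _ => ?_
  exact Fin.sum_univ_eq_sum_range (fun b => g ((a : ℤ) - (b : ℤ))) M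

/-- splitting a function space at one coordinate -/
def splitEquiv {n : ℕ} (j : Fin n) (κ : Type*) :
    (Fin n → κ) ≃ κ × ({i : Fin n // i ≠ j} → κ) where
  toFun p := (p j, fun i => p i)
  invFun y i := if h : i = j then y.1 else y.2 ⟨i, h⟩
  left_inv p := by
    funext i
    by_cases h : i = j
    · subst h; simp
    · simp [h]
  right_inv y := by
    refine Prod.ext ?_ ?_
    · simp
    · funext i
      simp [i.2]

/-- the n-dimensional Fejér kernel inequality -/
lemma comb {n M : ℕ} (hM : 1 ≤ M) (E : (Fin n → ℤ) → ℝ) (hE : ∀ l, 0 ≤ E l) (j : Fin n) :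
    (2 - 2 / (M : ℝ)) * ∑ p : Fin n → Fin M × Fin M,
        E (fun i => ((p i).1 : ℤ) - ((p i).2 : ℤ))
      ≤ ∑ p : Fin n → Fin M × Fin M,
          (E ((fun i => ((p i).1 : ℤ) - ((p i).2 : ℤ)) + Pi.single j 1)
            + E ((fun i => ((p i).1 : ℤ) - ((p i).2 : ℤ)) - Pi.single j 1)) := by
  classical
  set κ := Fin M × Fin M
  -- re-index by the split equivalence
  have hsplit : ∀ (F : (Fin n → κ) → ℝ),
      ∑ p : Fin n → κ, F p = ∑ y : κ × ({i : Fin n // i ≠ j} → κ), F ((splitEquiv j κ).symm y) :=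
    fun F => (Equiv.sum_comp (splitEquiv j κ).symm F).symm
  rw [hsplit, hsplit, Fintype.sum_prod_type_right, Fintype.sum_prod_type_right, Finset.mul_sum]
  refine Finset.sum_le_sum fun r _ => ?_
  -- now a one-dimensional statement for fixed r
  set u : ℤ → ℝ := fun z => E (fun i => if h : i = j then z else ((r ⟨i, h⟩).1 : ℤ) - ((r ⟨i, h⟩).2 : ℤ)) with hu
  have key1 : ∀ x : κ, E (fun i => (((splitEquiv j κ).symm (x, r) i).1 : ℤ)
      - (((splitEquiv j κ).symm (x, r) i).2 : ℤ)) = u ((x.1 : ℤ) - (x.2 : ℤ)) := by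
    intro x
    apply congrArg E
    funext i
    by_cases h : i = j
    · subst h; simp [splitEquiv, u]
    · simp [splitEquiv, h, u]
  have key2 : ∀ x : κ, E ((fun i => (((splitEquiv j κ).symm (x, r) i).1 : ℤ)
      - (((splitEquiv j κ).symm (x, r) i).2 : ℤ)) + Pi.single j 1) = u ((x.1 : ℤ) - (x.2 : ℤ) + 1) := by
    intro x
    apply congrArg E
    funext i
    by_cases h : i = j
    · subst h; simp [splitEquiv, u, Pi.single_apply]
    · simp [splitEquiv, h, u, Pi.single_apply]
  have key3 : ∀ x : κ, E ((fun i => (((splitEquiv j κ).symm (x, r) i).1 : ℤ)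
      - (((splitEquiv j κ).symm (x, r) i).2 : ℤ)) - Pi.single j 1) = u ((x.1 : ℤ) - (x.2 : ℤ) - 1) := by
    intro x
    apply congrArg E
    funext i
    by_cases h : i = j
    · subst h; simp [splitEquiv, u, Pi.single_apply]
    · simp [splitEquiv, h, u, Pi.single_apply]
  calc (2 - 2 / (M : ℝ)) * ∑ x : κ, E (fun i => (((splitEquiv j κ).symm (x, r) i).1 : ℤ)
        - (((splitEquiv j κ).symm (x, r) i).2 : ℤ))
      = (2 - 2 / (M : ℝ)) * ∑ x : κ, u ((x.1 : ℤ) - (x.2 : ℤ)) := by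
        congr 1; exact Finset.sum_congr rfl fun x _ => key1 x
    _ = (2 - 2 / (M : ℝ)) * ∑ p ∈ (range M) ×ˢ (range M), u ((p.1 : ℤ) - (p.2 : ℤ)) := by
        rw [sq_sum]
    _ ≤ ∑ p ∈ (range M) ×ˢ (range M), (u ((p.1 : ℤ) - (p.2 : ℤ) + 1) + u ((p.1 : ℤ) - (p.2 : ℤ) - 1)) :=
        one_dim M hM u (fun z => hE _)
    _ = ∑ x : κ, (u ((x.1 : ℤ) - (x.2 : ℤ) + 1) + u ((x.1 : ℤ) - (x.2 : ℤ) - 1)) := by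
        rw [← sq_sum M (fun z => u (z + 1) + u (z - 1))]
    _ = _ := by
        refine Finset.sum_congr rfl fun x _ => ?_
        rw [key2 x, key3 x]

end Comb

set_option maxHeartbeats 1000000 in
/-- Bochner–Fejér approximation: every almost periodic `h ∈ AP(Γ, X)`
can be uniformly approximated, within any `ε > 0`, by a trigonometric polynomial of
the form `p(γ) = Σ_{k} a_k · χ_k(γ) • ĥ(χ_k)`, built from its own Fourier
coefficients `ĥ(χ_k) = lim_n |Hₙ|⁻¹ Σ_{γ∈Hₙ} conj (χ_k γ) • h γ`. -/
theorem bochner_fejer_approximation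
    {Γ : Type*} [AddCommGroup Γ] [Countable Γ] [DecidableEq Γ]
    {X : Type*} [NormedAddCommGroup X] [InnerProductSpace ℂ X] [FiniteDimensional ℂ X]
    (H : ℕ → Finset Γ) (hH : IsBohrBochner H)
    (h : Γ → X) (hAP : IsAP h) :
    ∀ ε : ℝ, 0 < ε →
      ∃ (N : ℕ) (χs : Fin N → Γ → ℂ) (as : Fin N → ℂ) (cs : Fin N → X),
        (∀ k, IsChar (χs k)) ∧
        (∀ k, Tendsto
          (fun n => (((H n).card : ℂ))⁻¹ • ∑ γ ∈ H n, (starRingEnd ℂ) (χs k γ) • h γ)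
          atTop (nhds (cs k))) ∧
        ∀ γ, ‖h γ - ∑ k, (as k * χs k γ) • cs k‖ < ε := by
  intro ε hε
  classical
  -- boundedness of h
  obtain ⟨p1, ⟨n1, ψ1, b1, hchar1, hrep1⟩, herr1⟩ := hAP 1 one_pos
  have hbound : ∀ γ, ‖h γ‖ ≤ 1 + ∑ k, ‖b1 k‖ := by
    intro γ
    have h1 := herr1 γ
    have h2 : ‖p1 γ‖ ≤ ∑ k, ‖b1 k‖ := by
      rw [hrep1 γ]
      refine le_trans (norm_sum_le _ _) (Finset.sum_le_sum fun k _ => ?_)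
      rw [norm_smul, (hchar1 k).2 γ, one_mul]
    calc ‖h γ‖ ≤ ‖h γ - p1 γ‖ + ‖p1 γ‖ := by
          have := norm_add_le (h γ - p1 γ) (p1 γ)
          simpa using this
      _ ≤ 1 + ∑ k, ‖b1 k‖ := add_le_add h1.le h2
  -- trig approximation within ε/4
  obtain ⟨q, ⟨n, ψ, b, hψ, hrep⟩, herr⟩ := hAP (ε / 4) (by positivity)
  set Cb : ℝ := ∑ j, ‖b j‖ with hCbdef
  have hCb : 0 ≤ Cb := Finset.sum_nonneg fun _ _ => norm_nonneg _
  -- choice of M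
  obtain ⟨M, hM1, hMs⟩ : ∃ M : ℕ, 1 ≤ M ∧ (Cb + 1) * Real.sqrt (2 / M) < ε / 2 := by
    have hA : (0:ℝ) < ε / 2 / (Cb + 1) := by positivity
    obtain ⟨M0, hM0⟩ := exists_nat_gt (2 / (ε / 2 / (Cb + 1)) ^ 2)
    have hM0pos : (0:ℝ) < M0 + 1 := by positivity
    refine ⟨M0 + 1, le_add_self, ?_⟩
    have h2M : 2 / ((M0:ℝ) + 1) < (ε / 2 / (Cb + 1)) ^ 2 := by
      rw [div_lt_iff₀ hM0pos]
      have hgt : 2 / (ε / 2 / (Cb + 1)) ^ 2 < (M0:ℝ) := hM0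
      have hsq : (0:ℝ) < (ε / 2 / (Cb + 1)) ^ 2 := by positivity
      rw [div_lt_iff₀ hsq] at hgt
      nlinarith
    have hs : Real.sqrt (2 / ((M0:ℝ) + 1)) < ε / 2 / (Cb + 1) :=
      (Real.sqrt_lt' hA).2 h2M
    have hCb1 : (0:ℝ) < Cb + 1 := by positivity
    calc (Cb + 1) * Real.sqrt (2 / ((M0 + 1 : ℕ) : ℝ))
        = (Cb + 1) * Real.sqrt (2 / ((M0:ℝ) + 1)) := by push_cast; ring_nf
      _ < (Cb + 1) * (ε / 2 / (Cb + 1)) := by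
          exact mul_lt_mul_of_pos_left hs hCb1
      _ = ε / 2 := by field_simp
  have hMR1 : (1:ℝ) ≤ (M:ℝ) := by exact_mod_cast hM1
  -- the exponent bookkeeping
  set L : (Fin n → Fin M × Fin M) → (Fin n → ℤ) := fun p i => ((p i).1 : ℤ) - ((p i).2 : ℤ)
    with hLdef
  set χf : (Fin n → ℤ) → Γ → ℂ := fun l γ => ∏ i, ψ i γ ^ (l i) with hχfdef
  set E : (Fin n → ℤ) → ℝ := fun l => if χf l = (fun _ => (1:ℂ)) then (1:ℝ) else 0 with hEdef
  have hE0 : ∀ l, 0 ≤ E l := by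
    intro l
    simp only [hEdef]
    split_ifs <;> norm_num
  set W : ℝ := ((M:ℝ) ^ n)⁻¹ * ∑ p : Fin n → Fin M × Fin M, E (L p) with hWdef
  have hMn : (0:ℝ) < (M:ℝ) ^ n := by positivity
  have hW1 : 1 ≤ W := by
    have hdiag : ((M:ℝ) ^ n) ≤ ∑ p : Fin n → Fin M × Fin M, E (L p) := by
      have hinj : Function.Injective (fun t : Fin n → Fin M => fun i => ((t i, t i) : Fin M × Fin M)) := by
        intro t t' htt
        funext i
        have := congrFun htt i
        exact (Prod.ext_iff.1 this).1
      have hsub : (Finset.univ.image (fun t : Fin n → Fin M => fun i => ((t i, t i) : Fin M × Fin M)))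
          ⊆ Finset.univ := Finset.subset_univ _
      have h1 : ∑ p ∈ Finset.univ.image (fun t : Fin n → Fin M => fun i => ((t i, t i) : Fin M × Fin M)),
          E (L p) ≤ ∑ p : Fin n → Fin M × Fin M, E (L p) :=
        Finset.sum_le_sum_of_subset_of_nonneg hsub (fun p _ _ => hE0 _)
      have h2 : ∑ p ∈ Finset.univ.image (fun t : Fin n → Fin M => fun i => ((t i, t i) : Fin M × Fin M)),
          E (L p) = ∑ t : Fin n → Fin M, E (L (fun i => (t i, t i))) :=
        Finset.sum_image (fun a _ b _ hab => hinj hab)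
      have h3 : ∀ t : Fin n → Fin M, E (L (fun i => (t i, t i))) = 1 := by
        intro t
        have hL0 : L (fun i => (t i, t i)) = 0 := by
          funext i
          simp [hLdef]
        rw [hL0, hEdef]
        simp only []
        rw [if_pos]
        funext γ
        rw [hχfdef]
        simp only []
        exact zprod_zero γ
      have h4 : ∑ t : Fin n → Fin M, E (L (fun i => (t i, t i))) = ((M:ℝ) ^ n) := by
        rw [Finset.sum_congr rfl fun t _ => h3 t, Finset.sum_const, Finset.card_univ]
        simp [Fintype.card_fun]
      rw [h2, h4] at h1
      exact h1
    rw [hWdef]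
    calc (1:ℝ) = ((M:ℝ)^n) * ((M:ℝ)^n)⁻¹ := by field_simp
      _ ≤ (∑ p : Fin n → Fin M × Fin M, E (L p)) * ((M:ℝ)^n)⁻¹ := by
          exact mul_le_mul_of_nonneg_right hdiag (by positivity)
      _ = ((M:ℝ)^n)⁻¹ * ∑ p : Fin n → Fin M × Fin M, E (L p) := by ring
  have hW0 : (0:ℝ) < W := lt_of_lt_of_le one_pos hW1
  set atil : ℝ := ((M:ℝ) ^ n)⁻¹ / W with hatil
  have hatil0 : 0 ≤ atil := by positivity
  have hatilsum : atil * ∑ p : Fin n → Fin M × Fin M, E (L p) = 1 := by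
    rw [hatil, div_mul_eq_mul_div, ← hWdef]
    exact div_self hW0.ne'
  -- Fourier coefficients
  have hFC : ∀ p : Fin n → Fin M × Fin M, ∃ c : X,
      Tendsto (fun N => avg H (fun γ => (starRingEnd ℂ) (χf (-(L p)) γ) • h γ) N) atTop (nhds c) :=
    fun p => fourier_exists hH hAP (isChar_zprod hψ (-(L p)))
  choose cf hcf using hFC
  refine ⟨Fintype.card (Fin n → Fin M × Fin M),
    fun k => χf (-(L ((Fintype.equivFin (Fin n → Fin M × Fin M)).symm k))),
    fun k => ((atil : ℝ) : ℂ),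
    fun k => cf ((Fintype.equivFin (Fin n → Fin M × Fin M)).symm k), ?_, ?_, ?_⟩
  · intro k
    exact isChar_zprod hψ _
  · intro k
    exact hcf _
  · intro γ
    -- the kernel
    set Kc : Γ → ℂ := fun γ' => ∑ p : Fin n → Fin M × Fin M, ((atil : ℝ) : ℂ) * χf (L p) γ'
      with hKc
    set Krf : Γ → ℝ := fun γ' => atil * ∏ i, Complex.normSq (∑ a : Fin M, ψ i γ' ^ ((a : ℕ) : ℤ))
      with hKrf
    have hKpos : ∀ γ', 0 ≤ Krf γ' := by
      intro γ'
      simp only [hKrf]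
      exact mul_nonneg hatil0 (Finset.prod_nonneg fun i _ => Complex.normSq_nonneg _)
    have hKreal : ∀ γ', ((Krf γ' : ℝ) : ℂ) = Kc γ' := by
      intro γ'
      have hfac : ∀ i : Fin n, ((Complex.normSq (∑ a : Fin M, ψ i γ' ^ ((a : ℕ) : ℤ)) : ℝ) : ℂ)
          = ∑ x : Fin M × Fin M, ψ i γ' ^ (((x.1 : ℕ) : ℤ) - ((x.2 : ℕ) : ℤ)) := by
        intro i
        rw [← Complex.mul_conj, map_sum, Finset.sum_mul_sum, Fintype.sum_prod_type]
        refine Finset.sum_congr rfl fun a _ => Finset.sum_congr rfl fun c _ => ?_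
        rw [map_zpow₀, conj_eq_inv ((hψ i).2 γ'), inv_zpow, ← zpow_neg,
          ← zpow_add₀ (char_ne_zero (hψ i) γ')]
        congr 1
        try push_cast
        try ring
      calc ((Krf γ' : ℝ) : ℂ)
          = ((atil : ℝ) : ℂ) * ∏ i, ((Complex.normSq (∑ a : Fin M, ψ i γ' ^ ((a : ℕ) : ℤ)) : ℝ) : ℂ) := by
            simp only [hKrf]; push_cast; ring
        _ = ((atil : ℝ) : ℂ) * ∏ i, ∑ x : Fin M × Fin M, ψ i γ' ^ (((x.1 : ℕ) : ℤ) - ((x.2 : ℕ) : ℤ)) := by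
            rw [Finset.prod_congr rfl fun i _ => hfac i]
        _ = ((atil : ℝ) : ℂ) * ∑ p : Fin n → Fin M × Fin M, ∏ i, ψ i γ' ^ (L p i) := by
            congr 1
            rw [Finset.prod_univ_sum]
            rw [Fintype.piFinset_univ]
        _ = Kc γ' := by
            simp only [hKc, hχfdef]
            rw [Finset.mul_sum]
    -- character mean limits
    have hCA : ∀ l : Fin n → ℤ, Tendsto (fun N => avg H (χf l) N) atTop (nhds ((E l : ℝ) : ℂ)) := by
      intro l
      have h1 := char_avg hH (isChar_zprod hψ l)
      have h2 : ((E l : ℝ) : ℂ) = (if (fun γ => ∏ i, ψ i γ ^ (l i)) = (fun _ => (1 : ℂ)) then (1 : ℂ) else 0) := by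
        simp only [hEdef, hχfdef]
        split_ifs <;> norm_num
      rw [hχfdef, h2]
      exact h1
    -- mean of the kernel
    have hKcavg : ∀ N, avg H Kc N
        = ∑ p : Fin n → Fin M × Fin M, ((atil : ℝ) : ℂ) * avg H (χf (L p)) N := by
      intro N
      calc avg H Kc N
          = ∑ p : Fin n → Fin M × Fin M, avg H (fun γ' => ((atil : ℝ) : ℂ) * χf (L p) γ') N := by
            rw [hKc]
            exact avg_sum H Finset.univ (fun p γ' => ((atil : ℝ) : ℂ) * χf (L p) γ') N
        _ = ∑ p : Fin n → Fin M × Fin M, ((atil : ℝ) : ℂ) * avg H (χf (L p)) N := by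
            refine Finset.sum_congr rfl fun p _ => ?_
            have := avg_csmul H ((atil : ℝ) : ℂ) (χf (L p)) N
            simpa [smul_eq_mul] using this
    have T1 : Tendsto (fun N => avg H Kc N) atTop (nhds 1) := by
      have hlim : Tendsto (fun N => ∑ p : Fin n → Fin M × Fin M, ((atil : ℝ) : ℂ) * avg H (χf (L p)) N)
          atTop (nhds (∑ p : Fin n → Fin M × Fin M, ((atil : ℝ) : ℂ) * ((E (L p) : ℝ) : ℂ))) :=
        tendsto_finset_sum _ fun p _ => (hCA (L p)).const_mul _
      have hval : (∑ p : Fin n → Fin M × Fin M, ((atil : ℝ) : ℂ) * ((E (L p) : ℝ) : ℂ)) = 1 := by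
        have e : (∑ p : Fin n → Fin M × Fin M, ((atil : ℝ) : ℂ) * ((E (L p) : ℝ) : ℂ))
            = (((atil * ∑ p : Fin n → Fin M × Fin M, E (L p) : ℝ)) : ℂ) := by
          push_cast
          rw [Finset.mul_sum]
        rw [e, hatilsum, Complex.ofReal_one]
      rw [← hval]
      exact Tendsto.congr (fun N => (hKcavg N).symm) hlim
    -- the shifted averages
    have hshift : ∀ p : Fin n → Fin M × Fin M,
        Tendsto (fun N => avg H (fun γ' => (starRingEnd ℂ) (χf (-(L p)) γ') • h (γ + γ')) N)
          atTop (nhds (χf (-(L p)) γ • cf p)) :=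
      fun p => fourier_shift hH hbound (isChar_zprod hψ _) (hcf p) γ
    have hKcavg2 : ∀ N, avg H (fun γ' => Kc γ' • h (γ + γ')) N
        = ∑ p : Fin n → Fin M × Fin M,
            ((atil : ℝ) : ℂ) • avg H (fun γ' => (starRingEnd ℂ) (χf (-(L p)) γ') • h (γ + γ')) N := by
      intro N
      have hconj : ∀ (p : Fin n → Fin M × Fin M) γ',
          (starRingEnd ℂ) (χf (-(L p)) γ') = χf (L p) γ' := by
        intro p γ'
        simp only [hχfdef]
        rw [zprod_conj hψ (-(L p)) γ', neg_neg]
      have hpt : (fun γ' => Kc γ' • h (γ + γ'))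
          = fun γ' => ∑ p : Fin n → Fin M × Fin M,
              ((atil : ℝ) : ℂ) • ((starRingEnd ℂ) (χf (-(L p)) γ') • h (γ + γ')) := by
        funext γ'
        simp only [hKc]
        rw [Finset.sum_smul]
        refine Finset.sum_congr rfl fun p _ => ?_
        rw [mul_smul, hconj p γ']
      rw [hpt, avg_sum]
      exact Finset.sum_congr rfl fun p _ => avg_csmul H _ _ N
    have T2 : Tendsto (fun N => avg H (fun γ' => Kc γ' • h (γ + γ')) N) atTop
        (nhds (∑ p : Fin n → Fin M × Fin M, (((atil : ℝ) : ℂ) * χf (-(L p)) γ) • cf p)) := by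
      have hlim := tendsto_finset_sum (f := fun (p : Fin n → Fin M × Fin M) N =>
          ((atil : ℝ) : ℂ) • avg H (fun γ' => (starRingEnd ℂ) (χf (-(L p)) γ') • h (γ + γ')) N)
        Finset.univ (fun p _ => (hshift p).const_smul ((atil : ℝ) : ℂ))
      have hval : ∑ p : Fin n → Fin M × Fin M, ((atil : ℝ) : ℂ) • (χf (-(L p)) γ • cf p)
          = ∑ p : Fin n → Fin M × Fin M, (((atil : ℝ) : ℂ) * χf (-(L p)) γ) • cf p :=
        Finset.sum_congr rfl fun p _ => (mul_smul _ _ _).symm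
      rw [← hval]
      exact Tendsto.congr (fun N => (hKcavg2 N).symm) hlim
    -- rewrite the goal sum
    have hgoal_sum : ∑ k : Fin (Fintype.card (Fin n → Fin M × Fin M)),
        ((((atil : ℝ) : ℂ)) * χf (-(L ((Fintype.equivFin (Fin n → Fin M × Fin M)).symm k))) γ)
          • cf ((Fintype.equivFin (Fin n → Fin M × Fin M)).symm k)
        = ∑ p : Fin n → Fin M × Fin M, (((atil : ℝ) : ℂ) * χf (-(L p)) γ) • cf p :=
      Equiv.sum_comp (Fintype.equivFin (Fin n → Fin M × Fin M)).symm
        (fun p => (((atil : ℝ) : ℂ) * χf (-(L p)) γ) • cf p)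
    rw [hgoal_sum]
    set pg : X := ∑ p : Fin n → Fin M × Fin M, (((atil : ℝ) : ℂ) * χf (-(L p)) γ) • cf p with hpg
    -- the error sequence
    set g : ℕ → X := fun N => avg H (fun γ' => Kc γ' • (h γ - h (γ + γ'))) N with hg
    have hgdec : ∀ N, g N = (avg H Kc N) • h γ - avg H (fun γ' => Kc γ' • h (γ + γ')) N := by
      intro N
      simp only [hg]
      unfold avg
      rw [show (fun γ' => Kc γ' • (h γ - h (γ + γ')))
          = fun γ' => Kc γ' • h γ - Kc γ' • h (γ + γ') from funext fun γ' => smul_sub _ _ _]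
      rw [Finset.sum_sub_distrib, smul_sub]
      congr 1
      rw [smul_assoc, Finset.sum_smul]
    have Tg : Tendsto g atTop (nhds (h γ - pg)) := by
      have hT := (T1.smul_const (h γ)).sub T2
      rw [one_smul] at hT
      exact Tendsto.congr (fun N => (hgdec N).symm) hT
    have Tgn : Tendsto (fun N => ‖g N‖) atTop (nhds ‖h γ - pg‖) := Tg.norm
    -- real averages
    set Rn : ℕ → ℝ := fun N => (((H N).card : ℝ))⁻¹ * ∑ γ' ∈ H N, Krf γ' with hRn
    set Un : Fin n → ℕ → ℝ :=
      fun j N => (((H N).card : ℝ))⁻¹ * ∑ γ' ∈ H N, Krf γ' * ‖ψ j γ' - 1‖ ^ 2 with hUn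
    have hRC : ∀ N, ((Rn N : ℝ) : ℂ) = avg H Kc N := by
      intro N
      simp only [hRn]
      unfold avg
      rw [smul_eq_mul]
      push_cast
      congr 1
      exact Finset.sum_congr rfl fun γ' _ => hKreal γ'
    have TR : Tendsto Rn atTop (nhds 1) := by
      have h1 : Tendsto (fun N => ((Rn N : ℝ) : ℂ)) atTop (nhds 1) :=
        Tendsto.congr (fun N => (hRC N).symm) T1
      have h2 := (Complex.continuous_re.tendsto (1 : ℂ)).comp h1
      simpa [Function.comp_def] using h2
    -- the limits of the second moments
    set uj : Fin n → ℝ := fun j => atil * ∑ p : Fin n → Fin M × Fin M,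
      (2 * E (L p) - E (L p + Pi.single j 1) - E (L p - Pi.single j 1)) with hujdef
    have hVreal : ∀ (j : Fin n) γ', ((Krf γ' : ℝ) : ℂ) * ((‖ψ j γ' - 1‖ : ℝ) : ℂ) ^ 2
        = ∑ p : Fin n → Fin M × Fin M, ((atil : ℝ) : ℂ) *
            (2 * χf (L p) γ' - χf (L p + Pi.single j 1) γ' - χf (L p - Pi.single j 1) γ') := by
      intro j γ'
      have hns : ((‖ψ j γ' - 1‖ ^ 2 : ℝ) : ℂ) = 2 - ψ j γ' - (starRingEnd ℂ) (ψ j γ') := by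
        have h1 : ((‖ψ j γ' - 1‖ ^ 2 : ℝ) : ℂ) = (ψ j γ' - 1) * (starRingEnd ℂ) (ψ j γ' - 1) := by
          rw [Complex.mul_conj, Complex.normSq_eq_norm_sq]
        have h2 : ψ j γ' * (starRingEnd ℂ) (ψ j γ') = 1 := mul_conj_one ((hψ j).2 γ')
        rw [h1, map_sub, map_one]
        linear_combination h2
      have e1 : ∀ p : Fin n → Fin M × Fin M, χf (L p) γ' * ψ j γ'
          = χf (L p + Pi.single j 1) γ' := by
        intro p
        simp only [hχfdef]
        calc (∏ i, ψ i γ' ^ (L p i)) * ψ j γ'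
            = (∏ i, ψ i γ' ^ (L p i)) * (∏ i, ψ i γ' ^ ((Pi.single j 1 : Fin n → ℤ) i)) := by
              rw [zprod_single hψ j γ']
          _ = ∏ i, ψ i γ' ^ (((L p + Pi.single j 1) : Fin n → ℤ) i) := zprod_mul hψ _ _ γ'
      have e2 : ∀ p : Fin n → Fin M × Fin M, χf (L p) γ' * (starRingEnd ℂ) (ψ j γ')
          = χf (L p - Pi.single j 1) γ' := by
        intro p
        simp only [hχfdef]
        calc (∏ i, ψ i γ' ^ (L p i)) * (starRingEnd ℂ) (ψ j γ')
            = (∏ i, ψ i γ' ^ (L p i)) * (starRingEnd ℂ) (∏ i, ψ i γ' ^ ((Pi.single j 1 : Fin n → ℤ) i)) := by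
              rw [zprod_single hψ j γ']
          _ = (∏ i, ψ i γ' ^ (L p i)) * (∏ i, ψ i γ' ^ ((-(Pi.single j 1) : Fin n → ℤ) i)) := by
              rw [zprod_conj hψ]
          _ = ∏ i, ψ i γ' ^ (((L p + -(Pi.single j 1)) : Fin n → ℤ) i) := zprod_mul hψ _ _ γ'
          _ = ∏ i, ψ i γ' ^ (((L p - Pi.single j 1) : Fin n → ℤ) i) := by rw [sub_eq_add_neg]
      calc ((Krf γ' : ℝ) : ℂ) * ((‖ψ j γ' - 1‖ : ℝ) : ℂ) ^ 2
          = ((Krf γ' : ℝ) : ℂ) * ((‖ψ j γ' - 1‖ ^ 2 : ℝ) : ℂ) := by push_cast; ring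
        _ = Kc γ' * (2 - ψ j γ' - (starRingEnd ℂ) (ψ j γ')) := by rw [hKreal γ', hns]
        _ = ∑ p : Fin n → Fin M × Fin M, (((atil : ℝ) : ℂ) * χf (L p) γ') *
              (2 - ψ j γ' - (starRingEnd ℂ) (ψ j γ')) := by
            simp only [hKc]
            rw [Finset.sum_mul]
        _ = _ := by
            refine Finset.sum_congr rfl fun p _ => ?_
            rw [← e1 p, ← e2 p]
            ring
    have TU : ∀ j : Fin n, Tendsto (Un j) atTop (nhds (uj j)) := by
      intro j
      have hUNeq : ∀ N, ((Un j N : ℝ) : ℂ)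
          = ∑ p : Fin n → Fin M × Fin M, ((atil : ℝ) : ℂ) *
              (2 * avg H (χf (L p)) N - avg H (χf (L p + Pi.single j 1)) N
                - avg H (χf (L p - Pi.single j 1)) N) := by
        intro N
        calc ((Un j N : ℝ) : ℂ)
            = avg H (fun γ' => ∑ p : Fin n → Fin M × Fin M, ((atil : ℝ) : ℂ) *
                (2 * χf (L p) γ' - χf (L p + Pi.single j 1) γ' - χf (L p - Pi.single j 1) γ')) N := by
              simp only [hUn]
              unfold avg
              rw [smul_eq_mul]
              push_cast
              congr 1
              exact Finset.sum_congr rfl fun γ' _ => hVreal j γ'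
          _ = ∑ p : Fin n → Fin M × Fin M, avg H (fun γ' => ((atil : ℝ) : ℂ) *
                (2 * χf (L p) γ' - χf (L p + Pi.single j 1) γ' - χf (L p - Pi.single j 1) γ')) N :=
              avg_sum H Finset.univ _ N
          _ = _ := Finset.sum_congr rfl fun p _ => avg_lin3 H _ _ _ _ N
      have hlim : Tendsto (fun N => ∑ p : Fin n → Fin M × Fin M, ((atil : ℝ) : ℂ) *
          (2 * avg H (χf (L p)) N - avg H (χf (L p + Pi.single j 1)) N
            - avg H (χf (L p - Pi.single j 1)) N)) atTop
          (nhds (∑ p : Fin n → Fin M × Fin M, ((atil : ℝ) : ℂ) *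
            (2 * ((E (L p) : ℝ) : ℂ) - ((E (L p + Pi.single j 1) : ℝ) : ℂ)
              - ((E (L p - Pi.single j 1) : ℝ) : ℂ)))) :=
        tendsto_finset_sum _ fun p _ =>
          ((((hCA (L p)).const_mul 2).sub (hCA _)).sub (hCA _)).const_mul _
      have hval : (∑ p : Fin n → Fin M × Fin M, ((atil : ℝ) : ℂ) *
          (2 * ((E (L p) : ℝ) : ℂ) - ((E (L p + Pi.single j 1) : ℝ) : ℂ)
            - ((E (L p - Pi.single j 1) : ℝ) : ℂ))) = ((uj j : ℝ) : ℂ) := by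
        simp only [hujdef]
        push_cast
        rw [Finset.mul_sum]
      have h1 : Tendsto (fun N => ((Un j N : ℝ) : ℂ)) atTop (nhds ((uj j : ℝ) : ℂ)) := by
        rw [← hval]
        exact Tendsto.congr (fun N => (hUNeq N).symm) hlim
      have h2 := (Complex.continuous_re.tendsto _).comp h1
      simpa [Function.comp_def] using h2
    -- the combinatorial bound
    have hujle : ∀ j : Fin n, uj j ≤ 2 / (M : ℝ) := by
      intro j
      have hcomb := comb hM1 E hE0 j
      have hL : ∀ p : Fin n → Fin M × Fin M,
          (fun i => ((p i).1 : ℤ) - ((p i).2 : ℤ)) = L p := fun p => rfl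
      simp only [hL] at hcomb
      have h1 : ∀ p : Fin n → Fin M × Fin M,
          2 * E (L p) - E (L p + Pi.single j 1) - E (L p - Pi.single j 1)
          = 2 * E (L p) - (E (L p + Pi.single j 1) + E (L p - Pi.single j 1)) := fun p => by ring
      have hsum1 : ∑ p : Fin n → Fin M × Fin M,
          (2 * E (L p) - E (L p + Pi.single j 1) - E (L p - Pi.single j 1))
          = 2 * (∑ p : Fin n → Fin M × Fin M, E (L p))
            - ∑ p : Fin n → Fin M × Fin M,
              (E (L p + Pi.single j 1) + E (L p - Pi.single j 1)) := by
        calc ∑ p : Fin n → Fin M × Fin M,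
            (2 * E (L p) - E (L p + Pi.single j 1) - E (L p - Pi.single j 1))
            = ∑ p : Fin n → Fin M × Fin M,
              (2 * E (L p) - (E (L p + Pi.single j 1) + E (L p - Pi.single j 1))) :=
              Finset.sum_congr rfl fun p _ => h1 p
          _ = ∑ p : Fin n → Fin M × Fin M, 2 * E (L p)
              - ∑ p : Fin n → Fin M × Fin M,
                (E (L p + Pi.single j 1) + E (L p - Pi.single j 1)) :=
              Finset.sum_sub_distrib _ _
          _ = _ := by rw [← Finset.mul_sum]
      have hstep : ∑ p : Fin n → Fin M × Fin M,
          (2 * E (L p) - E (L p + Pi.single j 1) - E (L p - Pi.single j 1))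
          ≤ (2 / (M : ℝ)) * ∑ p : Fin n → Fin M × Fin M, E (L p) := by
        rw [hsum1]
        linarith [hcomb]
      calc uj j ≤ atil * ((2 / (M : ℝ)) * ∑ p : Fin n → Fin M × Fin M, E (L p)) :=
            mul_le_mul_of_nonneg_left hstep hatil0
        _ = (2 / (M : ℝ)) * (atil * ∑ p : Fin n → Fin M × Fin M, E (L p)) := by ring
        _ = 2 / (M : ℝ) := by rw [hatilsum, mul_one]
    -- Cauchy–Schwarz step
    have hCS : ∀ (j : Fin n) (N : ℕ),
        (((H N).card : ℝ))⁻¹ * ∑ γ' ∈ H N, Krf γ' * ‖ψ j γ' - 1‖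
          ≤ Real.sqrt (Rn N * Un j N) := by
      intro j N
      have hc0 : (0:ℝ) ≤ (((H N).card : ℝ))⁻¹ := inv_nonneg.2 (Nat.cast_nonneg _)
      have hS0 : 0 ≤ ∑ γ' ∈ H N, Krf γ' * ‖ψ j γ' - 1‖ :=
        Finset.sum_nonneg fun γ' _ => mul_nonneg (hKpos γ') (norm_nonneg _)
      have hcs := Finset.sum_mul_sq_le_sq_mul_sq (H N) (fun γ' => Real.sqrt (Krf γ'))
        (fun γ' => Real.sqrt (Krf γ') * ‖ψ j γ' - 1‖)
      have he1 : ∑ γ' ∈ H N, Real.sqrt (Krf γ') * (Real.sqrt (Krf γ') * ‖ψ j γ' - 1‖)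
          = ∑ γ' ∈ H N, Krf γ' * ‖ψ j γ' - 1‖ :=
        Finset.sum_congr rfl fun γ' _ => by
          rw [← mul_assoc, Real.mul_self_sqrt (hKpos γ')]
      have he2 : ∑ γ' ∈ H N, Real.sqrt (Krf γ') ^ 2 = ∑ γ' ∈ H N, Krf γ' :=
        Finset.sum_congr rfl fun γ' _ => Real.sq_sqrt (hKpos γ')
      have he3 : ∑ γ' ∈ H N, (Real.sqrt (Krf γ') * ‖ψ j γ' - 1‖) ^ 2
          = ∑ γ' ∈ H N, Krf γ' * ‖ψ j γ' - 1‖ ^ 2 :=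
        Finset.sum_congr rfl fun γ' _ => by
          rw [mul_pow, Real.sq_sqrt (hKpos γ')]
      rw [he1, he2, he3] at hcs
      have key : ((((H N).card : ℝ))⁻¹ * ∑ γ' ∈ H N, Krf γ' * ‖ψ j γ' - 1‖) ^ 2
          ≤ Rn N * Un j N := by
        simp only [hRn, hUn]
        calc ((((H N).card : ℝ))⁻¹ * ∑ γ' ∈ H N, Krf γ' * ‖ψ j γ' - 1‖) ^ 2
            = ((((H N).card : ℝ))⁻¹) ^ 2 * (∑ γ' ∈ H N, Krf γ' * ‖ψ j γ' - 1‖) ^ 2 := by ring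
          _ ≤ ((((H N).card : ℝ))⁻¹) ^ 2 *
              ((∑ γ' ∈ H N, Krf γ') * ∑ γ' ∈ H N, Krf γ' * ‖ψ j γ' - 1‖ ^ 2) :=
              mul_le_mul_of_nonneg_left hcs (sq_nonneg _)
          _ = ((((H N).card : ℝ))⁻¹ * ∑ γ' ∈ H N, Krf γ') *
              ((((H N).card : ℝ))⁻¹ * ∑ γ' ∈ H N, Krf γ' * ‖ψ j γ' - 1‖ ^ 2) := by ring
      calc (((H N).card : ℝ))⁻¹ * ∑ γ' ∈ H N, Krf γ' * ‖ψ j γ' - 1‖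
          = Real.sqrt (((((H N).card : ℝ))⁻¹ * ∑ γ' ∈ H N, Krf γ' * ‖ψ j γ' - 1‖) ^ 2) :=
            (Real.sqrt_sq (mul_nonneg hc0 hS0)).symm
        _ ≤ Real.sqrt (Rn N * Un j N) := Real.sqrt_le_sqrt key
    -- the norm bound
    have hgb : ∀ N, ‖g N‖ ≤ 2 * (ε / 4) * Rn N + ∑ j, ‖b j‖ * Real.sqrt (Rn N * Un j N) := by
      intro N
      have s2 : ∀ γ', ‖h γ - h (γ + γ')‖ ≤ 2 * (ε / 4) + ∑ j, ‖b j‖ * ‖ψ j γ' - 1‖ := by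
        intro γ'
        have t1 : ‖q γ - q (γ + γ')‖ ≤ ∑ j, ‖b j‖ * ‖ψ j γ' - 1‖ := by
          rw [hrep γ, hrep (γ + γ'), ← Finset.sum_sub_distrib]
          refine le_trans (norm_sum_le _ _) (Finset.sum_le_sum fun j _ => ?_)
          rw [← sub_smul, norm_smul]
          have hpsi : ‖ψ j γ - ψ j (γ + γ')‖ = ‖ψ j γ' - 1‖ := by
            rw [(hψ j).1 γ γ']
            calc ‖ψ j γ - ψ j γ * ψ j γ'‖ = ‖ψ j γ * (1 - ψ j γ')‖ := by
                  congr 1; ring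
              _ = ‖ψ j γ‖ * ‖1 - ψ j γ'‖ := norm_mul _ _
              _ = ‖ψ j γ' - 1‖ := by rw [(hψ j).2 γ, one_mul, norm_sub_rev]
          rw [hpsi, mul_comm]
        have t2 := (herr γ).le
        have t3 := (herr (γ + γ')).le
        calc ‖h γ - h (γ + γ')‖
            ≤ ‖h γ - q γ‖ + ‖q γ - q (γ + γ')‖ + ‖q (γ + γ') - h (γ + γ')‖ := by
              have := dist_triangle4 (h γ) (q γ) (q (γ + γ')) (h (γ + γ'))
              simpa [dist_eq_norm] using this
          _ ≤ ε / 4 + (∑ j, ‖b j‖ * ‖ψ j γ' - 1‖) + ε / 4 := by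
              refine add_le_add (add_le_add t2 t1) ?_
              rw [norm_sub_rev]
              exact t3
          _ = 2 * (ε / 4) + ∑ j, ‖b j‖ * ‖ψ j γ' - 1‖ := by ring
      have s1 : ‖g N‖ ≤ (((H N).card : ℝ))⁻¹ * ∑ γ' ∈ H N, Krf γ' * ‖h γ - h (γ + γ')‖ := by
        simp only [hg]
        unfold avg
        rw [norm_smul, norm_inv, Complex.norm_natCast]
        refine mul_le_mul_of_nonneg_left ?_ (inv_nonneg.2 (Nat.cast_nonneg _))
        refine le_trans (norm_sum_le _ _) (le_of_eq (Finset.sum_congr rfl fun γ' _ => ?_))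
        rw [norm_smul, ← hKreal γ', Complex.norm_real, Real.norm_of_nonneg (hKpos γ')]
      have s3 : (((H N).card : ℝ))⁻¹ * ∑ γ' ∈ H N, Krf γ' * ‖h γ - h (γ + γ')‖
          ≤ (((H N).card : ℝ))⁻¹ * ∑ γ' ∈ H N, Krf γ' * (2 * (ε / 4) + ∑ j, ‖b j‖ * ‖ψ j γ' - 1‖) := by
        refine mul_le_mul_of_nonneg_left (Finset.sum_le_sum fun γ' _ => ?_) (inv_nonneg.2 (Nat.cast_nonneg _))
        exact mul_le_mul_of_nonneg_left (s2 γ') (hKpos γ')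
      have s4 : (((H N).card : ℝ))⁻¹ * ∑ γ' ∈ H N, Krf γ' * (2 * (ε / 4) + ∑ j, ‖b j‖ * ‖ψ j γ' - 1‖)
          = 2 * (ε / 4) * Rn N
            + ∑ j, ‖b j‖ * ((((H N).card : ℝ))⁻¹ * ∑ γ' ∈ H N, Krf γ' * ‖ψ j γ' - 1‖) := by
        simp only [hRn]
        have e1 : ∑ γ' ∈ H N, Krf γ' * (2 * (ε / 4) + ∑ j, ‖b j‖ * ‖ψ j γ' - 1‖)
            = 2 * (ε / 4) * ∑ γ' ∈ H N, Krf γ'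
              + ∑ j, ‖b j‖ * ∑ γ' ∈ H N, Krf γ' * ‖ψ j γ' - 1‖ := by
          calc ∑ γ' ∈ H N, Krf γ' * (2 * (ε / 4) + ∑ j, ‖b j‖ * ‖ψ j γ' - 1‖)
              = ∑ γ' ∈ H N, (2 * (ε / 4) * Krf γ'
                  + ∑ j, ‖b j‖ * (Krf γ' * ‖ψ j γ' - 1‖)) := by
                refine Finset.sum_congr rfl fun γ' _ => ?_
                rw [mul_add, Finset.mul_sum]
                congr 1
                · ring
                · exact Finset.sum_congr rfl fun j _ => by ring
            _ = 2 * (ε / 4) * ∑ γ' ∈ H N, Krf γ'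
                + ∑ γ' ∈ H N, ∑ j, ‖b j‖ * (Krf γ' * ‖ψ j γ' - 1‖) := by
                rw [Finset.sum_add_distrib, ← Finset.mul_sum]
            _ = 2 * (ε / 4) * ∑ γ' ∈ H N, Krf γ'
                + ∑ j, ‖b j‖ * ∑ γ' ∈ H N, Krf γ' * ‖ψ j γ' - 1‖ := by
                rw [Finset.sum_comm]
                congr 1
                exact Finset.sum_congr rfl fun j _ => by rw [← Finset.mul_sum]
        rw [e1, mul_add]
        congr 1
        · ring
        · rw [Finset.mul_sum]
          exact Finset.sum_congr rfl fun j _ => by ring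
      calc ‖g N‖ ≤ (((H N).card : ℝ))⁻¹ * ∑ γ' ∈ H N, Krf γ' * ‖h γ - h (γ + γ')‖ := s1
        _ ≤ (((H N).card : ℝ))⁻¹ * ∑ γ' ∈ H N, Krf γ' * (2 * (ε / 4) + ∑ j, ‖b j‖ * ‖ψ j γ' - 1‖) := s3
        _ = 2 * (ε / 4) * Rn N
            + ∑ j, ‖b j‖ * ((((H N).card : ℝ))⁻¹ * ∑ γ' ∈ H N, Krf γ' * ‖ψ j γ' - 1‖) := s4
        _ ≤ 2 * (ε / 4) * Rn N + ∑ j, ‖b j‖ * Real.sqrt (Rn N * Un j N) := by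
            refine add_le_add_right (Finset.sum_le_sum fun j _ => ?_) _
            exact mul_le_mul_of_nonneg_left (hCS j N) (norm_nonneg _)
    -- pass to the limit
    have Tbeta : Tendsto (fun N => 2 * (ε / 4) * Rn N + ∑ j, ‖b j‖ * Real.sqrt (Rn N * Un j N))
        atTop (nhds (2 * (ε / 4) * 1 + ∑ j, ‖b j‖ * Real.sqrt (1 * uj j))) :=
      (TR.const_mul _).add (tendsto_finset_sum _ fun j _ => ((TR.mul (TU j)).sqrt.const_mul _))
    have hfinal : ‖h γ - pg‖ ≤ 2 * (ε / 4) * 1 + ∑ j, ‖b j‖ * Real.sqrt (1 * uj j) :=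
      le_of_tendsto_of_tendsto' Tgn Tbeta hgb
    have hsqrt : ∀ j : Fin n, Real.sqrt (1 * uj j) ≤ Real.sqrt (2 / (M : ℝ)) := fun j =>
      Real.sqrt_le_sqrt (by rw [one_mul]; exact hujle j)
    have hlast : ∑ j, ‖b j‖ * Real.sqrt (1 * uj j) ≤ Cb * Real.sqrt (2 / (M : ℝ)) := by
      rw [hCbdef, Finset.sum_mul]
      exact Finset.sum_le_sum fun j _ => mul_le_mul_of_nonneg_left (hsqrt j) (norm_nonneg _)
    have hlast2 : Cb * Real.sqrt (2 / (M : ℝ)) ≤ (Cb + 1) * Real.sqrt (2 / (M : ℝ)) :=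
      mul_le_mul_of_nonneg_right (by linarith) (Real.sqrt_nonneg _)
    calc ‖h γ - pg‖ ≤ 2 * (ε / 4) * 1 + ∑ j, ‖b j‖ * Real.sqrt (1 * uj j) := hfinal
      _ ≤ ε / 2 + (Cb + 1) * Real.sqrt (2 / (M : ℝ)) := by
          have h24 : 2 * (ε / 4) * 1 = ε / 2 := by ring
          rw [h24]
          exact add_le_add_right (le_trans hlast hlast2) _
      _ < ε / 2 + ε / 2 := by linarith [hMs]
      _ = ε := by ring
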